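/- If m, n are coprime positive integers with 1 ≤ m/n ≤ 2 and 3 ∤ (m + n), then the triple (a, b, c) = (m(2n − m), n(2m − n), m² − mn + n²) is a primitive Eisenstein triple, i.e., a² − ab + b² = c², 0 ≤ a ≤ b, and gcd(a, b, c) = 1. -/

import Mathlib

theorem stmt_4 (m n : ℤ) (hm : 0 < m) (hn : 0 < n) (hmn : Int.gcd m n = 1)
    (h1 : n ≤ m) (h2 : m ≤ 2 * n) (h3 : ¬ (3 : ℤ) ∣ m + n)
    (a b c : ℤ) (ha : a = m * (2 * n - m)) (hb : b = n * (2 * m - n))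
    (hc : c = m ^ 2 - m * n + n ^ 2) :
    a ^ 2 - a * b + b ^ 2 = c ^ 2 ∧ 0 ≤ a ∧ a ≤ b ∧ Int.gcd a (Int.gcd b c) = 1 := by
  subst ha hb hc
  refine ⟨by ring, ?_, ?_, ?_⟩
  · exact mul_nonneg hm.le (by linarith)
  · nlinarith [sq_nonneg (m - n), sq_nonneg (m + n)]
  · have hco : IsCoprime m n := Int.isCoprime_iff_gcd_eq_one.mpr hmn
    by_contra hg
    obtain ⟨p, hp, hpd⟩ := Nat.exists_prime_and_dvd hg
    have hpZ : Prime (p : ℤ) := Nat.prime_iff_prime_int.mp hp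
    set A := m * (2 * n - m) with hA
    set B := n * (2 * m - n) with hB
    set C := m ^ 2 - m * n + n ^ 2 with hC
    have hpd' : (p : ℤ) ∣ (Int.gcd A (Int.gcd B C) : ℤ) := Int.natCast_dvd_natCast.mpr hpd
    have hpa : (p : ℤ) ∣ A := hpd'.trans (Int.gcd_dvd_left _ _)
    have hpbc : (p : ℤ) ∣ (Int.gcd B C : ℤ) := hpd'.trans (Int.gcd_dvd_right _ _)
    have hpb : (p : ℤ) ∣ B := hpbc.trans (Int.gcd_dvd_left _ _)
    have hpc : (p : ℤ) ∣ C := hpbc.trans (Int.gcd_dvd_right _ _)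
    have h3mn : (p : ℤ) ∣ 3 * (m * n) := by
      have : A + B + C = 3 * (m * n) := by rw [hA, hB, hC]; ring
      rw [← this]; exact dvd_add (dvd_add hpa hpb) hpc
    rcases hpZ.dvd_mul.mp h3mn with h3p | hmn'
    · -- p ∣ 3, so p = 3
      have hp3' : p ∣ 3 := by exact_mod_cast h3p
      have hp3 : (p : ℤ) = 3 := by
        have := (Nat.prime_dvd_prime_iff_eq hp (by norm_num)).mp hp3'
        exact_mod_cast this
      have : (p : ℤ) ∣ (m + n) ^ 2 := by
        have : (m + n) ^ 2 = C + 3 * (m * n) := by rw [hC]; ring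
        rw [this]; exact dvd_add hpc (hp3 ▸ Dvd.intro (m * n) rfl)
      exact h3 (hp3 ▸ hpZ.dvd_of_dvd_pow this)
    · rcases hpZ.dvd_mul.mp hmn' with hpm | hpn
      · have : (p : ℤ) ∣ n ^ 2 := by
          have : n ^ 2 = C - m * m + m * n := by rw [hC]; ring
          rw [this]
          exact dvd_add (dvd_sub hpc (hpm.mul_right m)) (hpm.mul_right n)
        exact hpZ.not_unit (hco.isUnit_of_dvd' hpm (hpZ.dvd_of_dvd_pow this))
      · have : (p : ℤ) ∣ m ^ 2 := by
          have : m ^ 2 = C + m * n - n * n := by rw [hC]; ring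
          rw [this]
          exact dvd_sub (dvd_add hpc (hpn.mul_left m)) (hpn.mul_left n)
        exact hpZ.not_unit (hco.isUnit_of_dvd' (hpZ.dvd_of_dvd_pow this) hpn)
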